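/- Conflicting Move edits delete the overridden move's source: for pairwise distinct i, j, k, applying Move[i, j] then Move[i, k] yields the same document as applying Move[i, k] then Conv[j, del]. -/

import Mathlib

/-- Atomic types of document components. -/
inductive Ty where
  | num | str | bool | del
deriving DecidableEq, Repr

/-- A document is a tuple (list) of atomic types. -/
abbrev Doc := List Ty

/-- Edit operations (1-based indices). `ins i t p` inserts type `t` at index `i`
    (with unique identifier `p`), shifting indices ≥ i right; `conv i t` sets the
    type at index `i` to `t`; `move i j` sets index `i` to the type at index `j`
    and sets index `j` to the tombstone `del`. -/
inductive Edit where
  | id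
  | ins (i : ℕ) (t : Ty) (p : ℕ)
  | conv (i : ℕ) (t : Ty)
  | move (i j : ℕ)
deriving DecidableEq, Repr

/-- Partial action of an edit on a document (1-based indices). -/
def Edit.apply : Edit → Doc → Option Doc
  | .id, d => some d
  | .ins i t _, d =>
      if 1 ≤ i ∧ i ≤ d.length + 1 then
        some (d.take (i-1) ++ t :: d.drop (i-1))
      else none
  | .conv i t, d =>
      if 1 ≤ i ∧ i ≤ d.length then some (d.set (i-1) t) else none
  | .move i j, d =>
      if 1 ≤ i ∧ i ≤ d.length ∧ 1 ≤ j ∧ j ≤ d.length ∧ i ≠ j then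
        some ((d.set (i-1) (d.getD (j-1) .del)).set (j-1) .del)
      else none

/-- conflicting moves delete the overridden move's source: for pairwise
distinct `i, j, k`, applying `Move[i,j]` then `Move[i,k]` yields the same document
as applying `Move[i,k]` then `Conv[j,del]`. -/
theorem move_move_conflict (i j k : ℕ) (hij : i ≠ j) (hik : i ≠ k) (hjk : j ≠ k)
    (d r₁ r₂ : Doc)
    (h₁ : ((Edit.move i j).apply d >>= (Edit.move i k).apply) = some r₁)
    (h₂ : ((Edit.move i k).apply d >>= (Edit.conv j Ty.del).apply) = some r₂) :
    r₁ = r₂ := by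
  simp only [Edit.apply, Option.bind_eq_bind] at h₁ h₂
  by_cases hc1 : 1 ≤ i ∧ i ≤ d.length ∧ 1 ≤ j ∧ j ≤ d.length ∧ i ≠ j
  · rw [if_pos hc1, Option.bind_some, Edit.apply] at h₁
    obtain ⟨hi1, hid, hj1, hjd, -⟩ := hc1
    have hk : 1 ≤ k ∧ k ≤ d.length := by
      by_contra hk
      rw [if_neg (by simp only [List.length_set]; tauto)] at h₁
      exact nomatch h₁
    obtain ⟨hk1, hkd⟩ := hk
    rw [if_pos (by simp only [List.length_set]; exact ⟨hi1, hid, hk1, hkd, hik⟩)] at h₁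
    rw [if_pos ⟨hi1, hid, hk1, hkd, hik⟩, Option.bind_some, Edit.apply] at h₂
    rw [if_pos (by simp only [List.length_set]; exact ⟨hj1, hjd⟩)] at h₂
    rw [Option.some.injEq] at h₁ h₂
    subst h₁ h₂
    have hij' : i - 1 ≠ j - 1 := by omega
    have hik' : i - 1 ≠ k - 1 := by omega
    have hjk' : j - 1 ≠ k - 1 := by omega
    have hj' : j - 1 < d.length := by omega
    have hk' : k - 1 < d.length := by omega
    have hgk : ((d.set (i-1) (d.getD (j-1) Ty.del)).set (j-1) Ty.del).getD (k-1) Ty.del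
        = d[k-1] := by
      rw [List.getD_eq_getElem?_getD, List.getElem?_set_ne hjk', List.getElem?_set_ne hik',
        List.getElem?_eq_getElem hk', Option.getD_some]
    have hgj : d.getD (j-1) Ty.del = d[j-1] := List.getD_eq_getElem d Ty.del hj'
    have hgk0 : d.getD (k-1) Ty.del = d[k-1] := List.getD_eq_getElem d Ty.del hk'
    apply List.ext_getElem
    · simp
    · intro n hn1 hn2
      simp only [List.length_set] at hn1 hn2
      simp only [hgj, hgk0, hgk, List.getElem_set]
      split_ifs <;> first | rfl | omega | (exact absurd rfl (by omega)) | simp_all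
  · rw [if_neg hc1] at h₁
    simp at h₁
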